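/- Let G be a countable IB-homogeneous graph with infinite star number (G embeds the star K_{1,n} for every n) that represents m (some bimorphism maps a nonedge to an edge). Then every finite subset of G has a cone: a vertex adjacent to all its elements. -/
import Mathlib


/-- A bimorphism of a graph: a bijective edge-preserving self-map. -/
def IsBimorphism {V : Type*} (G : SimpleGraph V) (F : V → V) : Prop :=
  Function.Bijective F ∧ ∀ u v, G.Adj u v → G.Adj (F u) (F v)

/-- A partial isomorphism of `G` with finite domain `S`. -/
def IsPartialIso {V : Type*} (G : SimpleGraph V) (S : Finset V) (f : V → V) : Prop :=
  Set.InjOn f S ∧ ∀ u ∈ S, ∀ v ∈ S, (G.Adj u v ↔ G.Adj (f u) (f v))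

/-- `G` is IB-homogeneous: every isomorphism between finite induced subgraphs
extends to a bimorphism of `G`. -/
def IBHom {V : Type*} (G : SimpleGraph V) : Prop :=
  ∀ (S : Finset V) (f : V → V), IsPartialIso G S f →
    ∃ F : V → V, IsBimorphism G F ∧ ∀ x ∈ S, F x = f x

/-- `G` represents the monomorphism `m`: some bimorphism maps a nonedge to an edge. -/
def RepM {V : Type*} (G : SimpleGraph V) : Prop :=
  ∃ F : V → V, IsBimorphism G F ∧
    ∃ u v : V, u ≠ v ∧ ¬ G.Adj u v ∧ G.Adj (F u) (F v)

/-- An independent set: pairwise nonadjacent vertices. -/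
def IsIndep {V : Type*} (G : SimpleGraph V) (s : Set V) : Prop :=
  s.Pairwise fun u v => ¬ G.Adj u v

open scoped Classical in
lemma bim_comp {V : Type*} {G : SimpleGraph V} {F K : V → V} (hF : IsBimorphism G F)
    (hK : IsBimorphism G K) : IsBimorphism G (F ∘ K) :=
  ⟨hF.1.comp hK.1, fun u v h => hF.2 _ _ (hK.2 _ _ h)⟩

open scoped Classical in
/-- Every finite set is the bijective bimorphic image of an independent set. -/
lemma indep_preimage {V : Type*} (G : SimpleGraph V) (hG : IBHom G) (hm : RepM G) :
    ∀ X : Finset V, ∃ (F : V → V) (I : Finset V), IsBimorphism G F ∧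
      IsIndep G ↑I ∧ I.image F = X := by
  suffices h : ∀ n (X : Finset V),
      ((X ×ˢ X).filter fun p : V × V => G.Adj p.1 p.2).card = n →
      ∃ (F : V → V) (I : Finset V), IsBimorphism G F ∧ IsIndep G ↑I ∧ I.image F = X by
    exact fun X => h _ X rfl
  intro n
  induction n using Nat.strong_induction_on with
  | _ n ih =>
    intro X hn
    rcases Finset.eq_empty_or_nonempty
        ((X ×ˢ X).filter fun p : V × V => G.Adj p.1 p.2) with he | hne
    · -- X is independent
      refine ⟨id, X, ⟨Function.bijective_id, fun u v h => h⟩, ?_, Finset.image_id⟩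
      intro x hx y hy hxy
      intro hadj
      have : (x, y) ∈ (X ×ˢ X).filter fun p : V × V => G.Adj p.1 p.2 := by
        simp only [Finset.mem_filter, Finset.mem_product]
        exact ⟨⟨hx, hy⟩, hadj⟩
      simp [he] at this
    · obtain ⟨⟨u, v⟩, hp⟩ := hne
      simp only [Finset.mem_filter, Finset.mem_product] at hp
      obtain ⟨⟨huX, hvX⟩, huv⟩ := hp
      obtain ⟨F0, hF0, a, b, hab, hnadj, hadj⟩ := hm
      -- partial iso sending the edge (F0 a, F0 b) to the edge (u, v)
      have hFab : F0 a ≠ F0 b := hadj.ne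
      set f : V → V := fun x => if x = F0 a then u else if x = F0 b then v else x with hf
      have hfa : f (F0 a) = u := by simp [hf]
      have hfb : f (F0 b) = v := by simp [hf, hFab.symm, (Ne.symm hFab)]
      have hpi : IsPartialIso G {F0 a, F0 b} f := by
        constructor
        · intro x hx y hy hxy
          simp only [Finset.coe_insert, Finset.coe_singleton, Set.mem_insert_iff,
            Set.mem_singleton_iff] at hx hy
          rcases hx with rfl | rfl <;> rcases hy with rfl | rfl
          · rfl
          · rw [hfa, hfb] at hxy; exact absurd hxy huv.ne
          · rw [hfa, hfb] at hxy; exact absurd hxy.symm huv.ne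
          · rfl
        · intro x hx y hy
          simp only [Finset.mem_insert, Finset.mem_singleton] at hx hy
          rcases hx with rfl | rfl <;> rcases hy with rfl | rfl
          · rw [hfa]; simp
          · rw [hfa, hfb]; simp [hadj, huv]
          · rw [hfa, hfb]; simp [hadj.symm, huv.symm]
          · rw [hfb]; simp
      obtain ⟨H, hH, hHext⟩ := hG _ _ hpi
      have hHa : H (F0 a) = u := by rw [hHext _ (by simp), hfa]
      have hHb : H (F0 b) = v := by rw [hHext _ (by simp [hFab]), hfb]
      set Φ : V → V := H ∘ F0 with hΦ
      have hΦbim : IsBimorphism G Φ := bim_comp hH hF0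
      have hΦinj : Function.Injective Φ := hΦbim.1.1
      have hΦa : Φ a = u := hHa
      have hΦb : Φ b = v := hHb
      set Y : Finset V := X.preimage Φ (hΦinj.injOn) with hY
      have hYX : Y.image Φ = X := by
        ext x
        simp only [Finset.mem_image, hY, Finset.mem_preimage]
        constructor
        · rintro ⟨y, hy, rfl⟩; exact hy
        · intro hx
          obtain ⟨y, rfl⟩ := hΦbim.1.2 x
          exact ⟨y, hx, rfl⟩
      -- edge count drops
      have hcard : ((Y ×ˢ Y).filter fun p : V × V => G.Adj p.1 p.2).card < n := by
        have hsub : ((Y ×ˢ Y).filter fun p : V × V => G.Adj p.1 p.2).image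
            (Prod.map Φ Φ) ⊆ (((X ×ˢ X).filter fun p : V × V => G.Adj p.1 p.2).erase (u, v)) := by
          intro p hp
          simp only [Finset.mem_image] at hp
          obtain ⟨⟨y1, y2⟩, hq, rfl⟩ := hp
          simp only [Finset.mem_filter, Finset.mem_product, hY, Finset.mem_preimage] at hq
          obtain ⟨⟨h1, h2⟩, hadjy⟩ := hq
          rw [Finset.mem_erase]
          refine ⟨?_, ?_⟩
          · intro heq
            have h1' : Φ y1 = Φ a := by rw [hΦa]; exact congrArg Prod.fst heq
            have h2' : Φ y2 = Φ b := by rw [hΦb]; exact congrArg Prod.snd heq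
            exact hnadj (hΦinj h1' ▸ hΦinj h2' ▸ hadjy)
          · simp only [Finset.mem_filter, Finset.mem_product]
            exact ⟨⟨h1, h2⟩, hΦbim.2 _ _ hadjy⟩
        have hinjim : ((Y ×ˢ Y).filter fun p : V × V => G.Adj p.1 p.2).card
            = (((Y ×ˢ Y).filter fun p : V × V => G.Adj p.1 p.2).image (Prod.map Φ Φ)).card := by
          rw [Finset.card_image_of_injective _ (hΦinj.prodMap hΦinj)]
        have huvmem : (u, v) ∈ (X ×ˢ X).filter fun p : V × V => G.Adj p.1 p.2 := by
          simp only [Finset.mem_filter, Finset.mem_product]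
          exact ⟨⟨huX, hvX⟩, huv⟩
        calc ((Y ×ˢ Y).filter fun p : V × V => G.Adj p.1 p.2).card
            ≤ (((X ×ˢ X).filter fun p : V × V => G.Adj p.1 p.2).erase (u, v)).card := by
              rw [hinjim]; exact Finset.card_le_card hsub
          _ < ((X ×ˢ X).filter fun p : V × V => G.Adj p.1 p.2).card :=
              Finset.card_erase_lt_of_mem huvmem
          _ = n := hn
      obtain ⟨K, I, hK, hI, hKI⟩ := ih _ hcard Y rfl
      refine ⟨Φ ∘ K, I, bim_comp hΦbim hK, hI, ?_⟩
      rw [← Finset.image_image, hKI, hYX]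

open scoped Classical in
/-- A countable IB-homogeneous graph with infinite star number representing `m` has the
cone property: every finite subset has a cone. -/
theorem stmt10 {V : Type*} [Countable V] (G : SimpleGraph V) (hG : IBHom G) (hm : RepM G)
    (hstar : ∀ n : ℕ, ∃ (c : V) (s : Finset V), s.card = n ∧ c ∉ s ∧
      IsIndep G ↑s ∧ ∀ v ∈ s, G.Adj c v) :
    ∀ X : Finset V, ∃ v : V, ∀ x ∈ X, G.Adj v x := by
  classical
  intro X
  obtain ⟨F, I, hF, hI, hFI⟩ := indep_preimage G hG hm X
  obtain ⟨c, s, hscard, hcs, hsind, hcadj⟩ := hstar I.card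
  -- bijection from s to I
  have e : (s : Finset V) ≃ (I : Finset V) := Finset.equivOfCardEq hscard
  set g : V → V := fun x => if h : x ∈ s then (e ⟨x, h⟩ : V) else x with hg
  have hgmem : ∀ x (h : x ∈ s), g x = (e ⟨x, h⟩ : V) := by
    intro x h; simp [hg, h]
  have hginj : Set.InjOn g s := by
    intro x hx y hy hxy
    rw [hgmem x hx, hgmem y hy] at hxy
    have := e.injective (Subtype.ext hxy)
    exact congrArg Subtype.val this
  have hpi : IsPartialIso G s g := by
    refine ⟨hginj, ?_⟩
    intro x hx y hy
    by_cases hxy : x = y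
    · subst hxy; simp
    · have h1 : ¬ G.Adj x y := hsind hx hy hxy
      have h2 : ¬ G.Adj (g x) (g y) := by
        have hgx : g x ∈ (I : Set V) := by rw [hgmem x hx]; exact (e ⟨x, hx⟩).2
        have hgy : g y ∈ (I : Set V) := by rw [hgmem y hy]; exact (e ⟨y, hy⟩).2
        exact hI hgx hgy (fun h => hxy (hginj hx hy h))
      simp [h1, h2]
  obtain ⟨H, hH, hHext⟩ := hG _ _ hpi
  refine ⟨F (H c), ?_⟩
  intro x hx
  rw [← hFI] at hx
  obtain ⟨i, hiI, rfl⟩ := Finset.mem_image.mp hx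
  obtain ⟨⟨w, hw⟩, hew⟩ := e.surjective ⟨i, hiI⟩
  have hHw : H w = i := by
    rw [hHext w hw, hgmem w hw, hew]
  exact hF.2 _ _ (hHw ▸ hH.2 _ _ (hcadj w hw))
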